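/- For m > r, the expansion manifold Θ_{r→m}(θ^r) of an irreducible r-neuron point θ^r is path-connected: any pair of distinct points θ, θ' ∈ Θ_{r→m}(θ^r) is connected via a finite union of line segments γ : [0,1] → Θ_{r→m}(θ^r), lying entirely inside Θ_{r→m}(θ^r), with γ(0) = θ and γ(1) = θ'. -/

import Mathlib

/-- The expansion manifold `Θ_{r→m}(θ^r)` of an `r`-neuron point `θ^r = (wr, ar)`,
as a subset of the parameter space of `m`-neuron points `(w, a)`.
A point belongs to it iff (for some number `j` of zero-type groups) there is a
grouping map `g : Fin m → Fin r ⊕ Fin j` such that: every group `inl t` is nonempty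
(`k_t ≥ 1`); each neuron of group `inl t` carries the incoming weight `wr t` and the
outgoing weights of this group sum to `ar t`; each neuron of a zero-type group `inr t`
carries the (arbitrary) incoming weight `w' t` and the outgoing weights of this group
sum to `0`. This is exactly the union `⋃_{s, π ∈ S_m} P_π Γ_s(θ^r)` of the paper. -/
def expansionManifold {din dout : ℕ} (r m : ℕ)
    (wr : Fin r → Fin din → ℝ) (ar : Fin r → Fin dout → ℝ) :
    Set ((Fin m → Fin din → ℝ) × (Fin m → Fin dout → ℝ)) :=
  { θ | ∃ (j : ℕ) (w' : Fin j → Fin din → ℝ) (g : Fin m → Fin r ⊕ Fin j),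
      (∀ t : Fin r, ∃ i, g i = Sum.inl t) ∧
      (∀ i, θ.1 i = Sum.elim wr w' (g i)) ∧
      (∀ t : Fin r,
        ∑ i ∈ Finset.univ.filter (fun i => g i = Sum.inl t), θ.2 i = ar t) ∧
      (∀ t : Fin j,
        ∑ i ∈ Finset.univ.filter (fun i => g i = Sum.inr t), θ.2 i = 0) }

namespace EMProof

open Finset Function

variable {din dout r m : ℕ}

section
variable (wr : Fin r → Fin din → ℝ) (ar : Fin r → Fin dout → ℝ)

/-- The slice of the expansion manifold with a fixed grouping `g`. -/
def Mg (j : ℕ) (g : Fin m → Fin r ⊕ Fin j) :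
    Set ((Fin m → Fin din → ℝ) × (Fin m → Fin dout → ℝ)) :=
  { θ | ∃ (w' : Fin j → Fin din → ℝ),
      (∀ t : Fin r, ∃ i, g i = Sum.inl t) ∧
      (∀ i, θ.1 i = Sum.elim wr w' (g i)) ∧
      (∀ t : Fin r,
        ∑ i ∈ Finset.univ.filter (fun i => g i = Sum.inl t), θ.2 i = ar t) ∧
      (∀ t : Fin j,
        ∑ i ∈ Finset.univ.filter (fun i => g i = Sum.inr t), θ.2 i = 0) }

lemma Mg_subset {j : ℕ} {g : Fin m → Fin r ⊕ Fin j} :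
    Mg wr ar j g ⊆ expansionManifold r m wr ar :=
  fun _ ⟨w', h⟩ => ⟨j, w', g, h⟩

lemma Mg_convex (j : ℕ) (g : Fin m → Fin r ⊕ Fin j) : Convex ℝ (Mg wr ar j g) := by
  rintro x ⟨wx, h1, hx2, hx3, hx4⟩ y ⟨wy, -, hy2, hy3, hy4⟩ a b ha hb hab
  refine ⟨a • wx + b • wy, h1, ?_, ?_, ?_⟩
  · intro i
    have hx := hx2 i
    have hy := hy2 i
    cases hgi : g i with
    | inl t =>
      rw [hgi] at hx hy
      simp only [Prod.fst_add, Prod.smul_fst, Pi.add_apply, Pi.smul_apply, hx, hy,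
        Sum.elim_inl]
      rw [← add_smul, hab, one_smul]
    | inr t =>
      rw [hgi] at hx hy
      simp only [Prod.fst_add, Prod.smul_fst, Pi.add_apply, Pi.smul_apply, hx, hy,
        Sum.elim_inr]
  · intro t
    simp only [Prod.snd_add, Prod.smul_snd, Pi.add_apply, Pi.smul_apply]
    rw [Finset.sum_add_distrib, ← Finset.smul_sum, ← Finset.smul_sum, hx3 t, hy3 t,
      ← add_smul, hab, one_smul]
  · intro t
    simp only [Prod.snd_add, Prod.smul_snd, Pi.add_apply, Pi.smul_apply]
    rw [Finset.sum_add_distrib, ← Finset.smul_sum, ← Finset.smul_sum, hx4 t, hy4 t,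
      smul_zero, smul_zero, add_zero]

/-- A single segment inside the manifold. -/
def Seg (x y : (Fin m → Fin din → ℝ) × (Fin m → Fin dout → ℝ)) : Prop :=
  segment ℝ x y ⊆ expansionManifold r m wr ar

lemma seg_of_Mg {j : ℕ} {g : Fin m → Fin r ⊕ Fin j} {x y}
    (hx : x ∈ Mg wr ar j g) (hy : y ∈ Mg wr ar j g) : Seg wr ar x y :=
  fun _ hz => Mg_subset wr ar ((Mg_convex wr ar j g).segment_subset hx hy hz)

lemma Seg_symm {x y : (Fin m → Fin din → ℝ) × (Fin m → Fin dout → ℝ)} (h : Seg wr ar x y) : Seg wr ar y x := by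
  unfold Seg at *
  rwa [segment_symm]

/-- Connectivity by finitely many segments. -/
def Conn : ((Fin m → Fin din → ℝ) × (Fin m → Fin dout → ℝ)) →
    ((Fin m → Fin din → ℝ) × (Fin m → Fin dout → ℝ)) → Prop :=
  Relation.ReflTransGen (Seg wr ar)

lemma Conn_symm {x y : (Fin m → Fin din → ℝ) × (Fin m → Fin dout → ℝ)} (h : Conn wr ar x y) : Conn wr ar y x :=
  by
    haveI : Std.Symm (Seg (m := m) wr ar) := ⟨fun _ _ => Seg_symm wr ar⟩
    exact Std.Symm.symm (r := Relation.ReflTransGen (Seg (m := m) wr ar)) _ _ h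

lemma conn_to_chain {x y : (Fin m → Fin din → ℝ) × (Fin m → Fin dout → ℝ)} (h : Conn wr ar x y) :
    ∃ (n : ℕ) (p : Fin (n + 1) → (Fin m → Fin din → ℝ) × (Fin m → Fin dout → ℝ)),
      p 0 = x ∧ p (Fin.last n) = y ∧
      ∀ i : Fin n, segment ℝ (p i.castSucc) (p i.succ) ⊆ expansionManifold r m wr ar := by
  induction h with
  | refl => exact ⟨0, fun _ => x, rfl, rfl, fun i => i.elim0⟩
  | @tail b c _ hbc ih =>
    obtain ⟨n, p, h0, hl, hs⟩ := ih
    refine ⟨n + 1, Fin.snoc p c, ?_, ?_, ?_⟩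
    · rw [show (0 : Fin (n + 2)) = Fin.castSucc 0 from rfl, Fin.snoc_castSucc, h0]
    · rw [Fin.snoc_last]
    · intro i
      refine Fin.lastCases ?_ ?_ i
      · rw [Fin.snoc_castSucc, hl, Fin.succ_last, Fin.snoc_last]
        exact hbc
      · intro k
        rw [Fin.succ_castSucc, Fin.snoc_castSucc, Fin.snoc_castSucc]
        exact hs k

/-- The grouping associated to an injective choice of representatives. -/
noncomputable def grp (ρ : Fin r → Fin m) : Fin m → Fin r ⊕ Fin m := fun i =>
  if h : ∃ t, ρ t = i then Sum.inl h.choose else Sum.inr i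

lemma grp_eq_inl_iff {ρ : Fin r → Fin m} (hρ : Injective ρ) {i : Fin m} {t : Fin r} :
    grp ρ i = Sum.inl t ↔ ρ t = i := by
  unfold grp
  split
  · rename_i h
    constructor
    · intro he
      rw [Sum.inl.injEq] at he
      exact he ▸ h.choose_spec
    · intro he
      have : h.choose = t := hρ (h.choose_spec.trans he.symm)
      rw [this]
  · rename_i h
    simp only [reduceCtorEq, false_iff]
    exact fun he => h ⟨t, he⟩

lemma grp_eq_inr {ρ : Fin r → Fin m} {i : Fin m} (h : ∀ t, ρ t ≠ i) :
    grp ρ i = Sum.inr i := by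
  unfold grp
  rw [dif_neg]
  rintro ⟨t, ht⟩
  exact h t ht

lemma grp_inr_no_rep {ρ : Fin r → Fin m} {i : Fin m} {t' : Fin m}
    (h : grp ρ i = Sum.inr t') : ∀ t, ρ t ≠ i := by
  intro t ht
  unfold grp at h
  rw [dif_pos ⟨t, ht⟩] at h
  exact absurd h (by simp)

/-- Membership in the slice `Mg (grp ρ)` for a point whose representatives carry the
full weights and all other neurons have zero outgoing weight. -/
lemma mem_Mg_of_rep {ρ : Fin r → Fin m} (hρ : Injective ρ)
    {θ : (Fin m → Fin din → ℝ) × (Fin m → Fin dout → ℝ)}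
    (h1 : ∀ t, θ.1 (ρ t) = wr t) (h2 : ∀ t, θ.2 (ρ t) = ar t)
    (h3 : ∀ i, (∀ t, ρ t ≠ i) → θ.2 i = 0) :
    θ ∈ Mg wr ar m (grp ρ) := by
  refine ⟨fun i => θ.1 i, fun t => ⟨ρ t, (grp_eq_inl_iff hρ).2 rfl⟩, ?_, ?_, ?_⟩
  · intro i
    by_cases h : ∃ t, ρ t = i
    · obtain ⟨s, hs⟩ := h
      rw [(grp_eq_inl_iff hρ).2 hs, Sum.elim_inl, ← hs, h1]
    · rw [grp_eq_inr (fun t ht => h ⟨t, ht⟩), Sum.elim_inr]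
  · intro t
    have : Finset.univ.filter (fun i => grp ρ i = Sum.inl t) = {ρ t} := by
      ext i
      simp only [Finset.mem_filter, Finset.mem_univ, true_and, Finset.mem_singleton,
        grp_eq_inl_iff hρ, eq_comm]
    rw [this, Finset.sum_singleton, h2]
  · intro t
    refine Finset.sum_eq_zero fun i hi => ?_
    rw [Finset.mem_filter] at hi
    exact h3 i (grp_inr_no_rep hi.2)

/-- The grouping where one extra neuron `p` is added to group `t`. -/
noncomputable def grp2 (ρ : Fin r → Fin m) (t : Fin r) (p : Fin m) : Fin m → Fin r ⊕ Fin m := fun i =>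
  if i = p then Sum.inl t else grp ρ i

lemma mem_Mg2 {ρ : Fin r → Fin m} (hρ : Injective ρ) {t : Fin r} {p : Fin m}
    (hp : ∀ s, ρ s ≠ p)
    {θ : (Fin m → Fin din → ℝ) × (Fin m → Fin dout → ℝ)}
    (h1 : ∀ s, θ.1 (ρ s) = wr s) (h1p : θ.1 p = wr t)
    (h2 : ∀ s, s ≠ t → θ.2 (ρ s) = ar s) (h2t : θ.2 (ρ t) + θ.2 p = ar t)
    (h3 : ∀ i, (∀ s, ρ s ≠ i) → i ≠ p → θ.2 i = 0) :
    θ ∈ Mg wr ar m (grp2 ρ t p) := by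
  have hfil : ∀ s : Fin r, s ≠ t →
      Finset.univ.filter (fun i => grp2 ρ t p i = Sum.inl s) = {ρ s} := by
    intro s hs
    ext i
    rw [Finset.mem_filter_univ]
    simp only [Finset.mem_filter_univ, Finset.mem_filter, Finset.mem_univ, true_and, Finset.mem_singleton, grp2]
    split
    · rename_i hip
      subst hip
      simp only [Sum.inl.injEq]
      constructor
      · intro h; exact absurd h hs.symm
      · intro h; exact absurd h.symm (hp s)
    · rw [grp_eq_inl_iff hρ, eq_comm]
  have hfilt : Finset.univ.filter (fun i => grp2 ρ t p i = Sum.inl t) = {ρ t, p} := by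
    ext i
    rw [Finset.mem_filter_univ]
    simp only [Finset.mem_filter_univ, Finset.mem_filter, Finset.mem_univ, true_and, Finset.mem_insert,
      Finset.mem_singleton, grp2]
    split
    · rename_i hip; simp [hip]
    · rename_i hip
      rw [grp_eq_inl_iff hρ, eq_comm]
      simp [hip]
  refine ⟨fun i => θ.1 i, fun s => ⟨ρ s, ?_⟩, ?_, ?_, ?_⟩
  · have he : grp2 ρ t p (ρ s) = grp ρ (ρ s) := if_neg (hp s)
    rw [he, (grp_eq_inl_iff hρ).2 rfl]
  · intro i
    simp only [grp2]
    split
    · rename_i hip; subst hip; rw [Sum.elim_inl, h1p]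
    · by_cases h : ∃ s, ρ s = i
      · obtain ⟨s, hs⟩ := h
        rw [(grp_eq_inl_iff hρ).2 hs, Sum.elim_inl, ← hs, h1]
      · rw [grp_eq_inr (fun s hs => h ⟨s, hs⟩), Sum.elim_inr]
  · intro s
    by_cases hs : s = t
    · rw [hs, hfilt, Finset.sum_pair (hp t), h2t]
    · rw [hfil s hs, Finset.sum_singleton, h2 s hs]
  · intro t'
    refine Finset.sum_eq_zero fun i hi => ?_
    rw [Finset.mem_filter, grp2] at hi
    have hi2 := hi.2
    split at hi2
    · exact absurd hi2 (by simp)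
    · rename_i hip
      exact h3 i (grp_inr_no_rep hi2) hip

/-- The canonical point associated to an injective choice of representatives. -/
noncomputable def Phi (ρ : Fin r → Fin m) : (Fin m → Fin din → ℝ) × (Fin m → Fin dout → ℝ) :=
  (fun i => if h : ∃ t, ρ t = i then wr h.choose else 0,
   fun i => if h : ∃ t, ρ t = i then ar h.choose else 0)

lemma Phi_fst_apply {ρ : Fin r → Fin m} (hρ : Injective ρ) (t : Fin r) :
    (Phi wr ar ρ).1 (ρ t) = wr t := by
  have h : ∃ s, ρ s = ρ t := ⟨t, rfl⟩
  show (if h : ∃ s, ρ s = ρ t then wr h.choose else 0) = wr t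
  rw [dif_pos h, hρ h.choose_spec]

lemma Phi_snd_apply {ρ : Fin r → Fin m} (hρ : Injective ρ) (t : Fin r) :
    (Phi wr ar ρ).2 (ρ t) = ar t := by
  have h : ∃ s, ρ s = ρ t := ⟨t, rfl⟩
  show (if h : ∃ s, ρ s = ρ t then ar h.choose else 0) = ar t
  rw [dif_pos h, hρ h.choose_spec]

lemma Phi_fst_zero {ρ : Fin r → Fin m} {i : Fin m} (h : ∀ t, ρ t ≠ i) :
    (Phi wr ar ρ).1 i = 0 := by
  show (if h : ∃ t, ρ t = i then wr h.choose else 0) = 0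
  exact dif_neg (fun ⟨t, ht⟩ => h t ht)

lemma Phi_snd_zero {ρ : Fin r → Fin m} {i : Fin m} (h : ∀ t, ρ t ≠ i) :
    (Phi wr ar ρ).2 i = 0 := by
  show (if h : ∃ t, ρ t = i then ar h.choose else 0) = 0
  exact dif_neg (fun ⟨t, ht⟩ => h t ht)

lemma Phi_mem {ρ : Fin r → Fin m} (hρ : Injective ρ) :
    Phi wr ar ρ ∈ Mg wr ar m (grp ρ) :=
  mem_Mg_of_rep wr ar hρ (Phi_fst_apply wr ar hρ) (Phi_snd_apply wr ar hρ)
    (fun _ h => Phi_snd_zero wr ar h)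

lemma update_injective {ρ : Fin r → Fin m} (hρ : Injective ρ) {t : Fin r} {p : Fin m}
    (hp : ∀ s, ρ s ≠ p) : Injective (Function.update ρ t p) := by
  intro a b hab
  by_cases ha : a = t <;> by_cases hb : b = t
  · rw [ha, hb]
  · subst ha
    rw [Function.update_self, Function.update_of_ne hb] at hab
    exact absurd hab.symm (hp b)
  · subst hb
    rw [Function.update_self, Function.update_of_ne ha] at hab
    exact absurd hab (hp a)
  · rw [Function.update_of_ne ha, Function.update_of_ne hb] at hab
    exact hρ hab

/-- Elementary move: relocating the representative of group `t` to a free slot `p`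
keeps the canonical point connected within the manifold (three segments). -/
lemma conn_move {ρ : Fin r → Fin m} (hρ : Injective ρ) (t : Fin r) {p : Fin m}
    (hp : ∀ s, ρ s ≠ p) :
    Conn wr ar (Phi wr ar ρ) (Phi wr ar (Function.update ρ t p)) := by
  have hρ' : Injective (Function.update ρ t p) := update_injective hρ hp
  set ρ' := Function.update ρ t p with hρ'def
  set χ₁ : (Fin m → Fin din → ℝ) × (Fin m → Fin dout → ℝ) :=
    (Function.update (Phi wr ar ρ).1 p (wr t), (Phi wr ar ρ).2) with hχ₁
  set χ₂ : (Fin m → Fin din → ℝ) × (Fin m → Fin dout → ℝ) :=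
    (Function.update (Phi wr ar ρ).1 p (wr t),
     Function.update (Function.update (Phi wr ar ρ).2 (ρ t) 0) p (ar t)) with hχ₂
  have hfst : ∀ s, Function.update (Phi wr ar ρ).1 p (wr t) (ρ s) = wr s := by
    intro s
    rw [Function.update_of_ne (hp s), Phi_fst_apply wr ar hρ]
  have mem1 : χ₁ ∈ Mg wr ar m (grp ρ) :=
    mem_Mg_of_rep wr ar hρ hfst (Phi_snd_apply wr ar hρ)
      (fun _ h => Phi_snd_zero wr ar h)
  have step1 : Seg wr ar (Phi wr ar ρ) χ₁ := seg_of_Mg wr ar (Phi_mem wr ar hρ) mem1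
  have mem2a : χ₁ ∈ Mg wr ar m (grp2 ρ t p) := by
    refine mem_Mg2 wr ar hρ hp hfst ?_ (fun s _ => Phi_snd_apply wr ar hρ s) ?_
      (fun i hi _ => Phi_snd_zero wr ar hi)
    · show Function.update (Phi wr ar ρ).1 p (wr t) p = wr t
      rw [Function.update_self]
    · show (Phi wr ar ρ).2 (ρ t) + (Phi wr ar ρ).2 p = ar t
      rw [Phi_snd_apply wr ar hρ, Phi_snd_zero wr ar hp, add_zero]
  have mem2b : χ₂ ∈ Mg wr ar m (grp2 ρ t p) := by
    refine mem_Mg2 wr ar hρ hp hfst ?_ ?_ ?_ ?_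
    · show Function.update (Phi wr ar ρ).1 p (wr t) p = wr t
      rw [Function.update_self]
    · intro s hs
      show Function.update (Function.update (Phi wr ar ρ).2 (ρ t) 0) p (ar t) (ρ s) = ar s
      rw [Function.update_of_ne (hp s), Function.update_of_ne (fun h => hs (hρ h)),
        Phi_snd_apply wr ar hρ]
    · show Function.update (Function.update (Phi wr ar ρ).2 (ρ t) 0) p (ar t) (ρ t)
        + Function.update (Function.update (Phi wr ar ρ).2 (ρ t) 0) p (ar t) p = ar t
      rw [Function.update_of_ne (hp t), Function.update_self, Function.update_self,
        zero_add]
    · intro i hi hip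
      show Function.update (Function.update (Phi wr ar ρ).2 (ρ t) 0) p (ar t) i = 0
      rw [Function.update_of_ne hip, Function.update_of_ne (Ne.symm (hi t)),
        Phi_snd_zero wr ar hi]
  have step2 : Seg wr ar χ₁ χ₂ := seg_of_Mg wr ar mem2a mem2b
  have hρ't : ρ' t = p := Function.update_self t p ρ
  have hρ's : ∀ s, s ≠ t → ρ' s = ρ s := fun s hs => Function.update_of_ne hs p ρ
  have mem3 : χ₂ ∈ Mg wr ar m (grp ρ') := by
    refine mem_Mg_of_rep wr ar hρ' ?_ ?_ ?_
    · intro s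
      rcases eq_or_ne s t with rfl | hs
      · rw [hρ't]
        show Function.update (Phi wr ar ρ).1 p (wr s) p = wr s
        rw [Function.update_self]
      · rw [hρ's s hs]
        exact hfst s
    · intro s
      rcases eq_or_ne s t with rfl | hs
      · rw [hρ't]
        show Function.update (Function.update (Phi wr ar ρ).2 (ρ s) 0) p (ar s) p = ar s
        rw [Function.update_self]
      · rw [hρ's s hs]
        show Function.update (Function.update (Phi wr ar ρ).2 (ρ t) 0) p (ar t) (ρ s) = ar s
        rw [Function.update_of_ne (hp s), Function.update_of_ne (fun h => hs (hρ h)),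
          Phi_snd_apply wr ar hρ]
    · intro i hi
      have hip : i ≠ p := fun h => hi t (by rw [hρ't, h])
      show Function.update (Function.update (Phi wr ar ρ).2 (ρ t) 0) p (ar t) i = 0
      rw [Function.update_of_ne hip]
      rcases eq_or_ne i (ρ t) with rfl | hit
      · rw [Function.update_self]
      · rw [Function.update_of_ne hit]
        refine Phi_snd_zero wr ar (fun s hs => ?_)
        rcases eq_or_ne s t with rfl | hst
        · exact hit hs.symm
        · exact hi s (by rw [hρ's s hst, hs])
  have step3 : Seg wr ar χ₂ (Phi wr ar ρ') := seg_of_Mg wr ar mem3 (Phi_mem wr ar hρ')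
  exact (Relation.ReflTransGen.single step1).trans
    ((Relation.ReflTransGen.single step2).trans (Relation.ReflTransGen.single step3))

lemma exists_free (hm : r < m) {ρ : Fin r → Fin m} (hρ : Injective ρ) :
    ∃ q, ∀ s, ρ s ≠ q := by
  by_contra h
  push_neg at h
  have : Fintype.card (Fin m) ≤ Fintype.card (Fin r) :=
    Fintype.card_le_of_surjective ρ (fun q => h q)
  simp only [Fintype.card_fin] at this
  omega

/-- Any two canonical points are connected. -/
lemma conn_perm (hm : r < m) :
    ∀ (n : ℕ) (ρ ρ' : Fin r → Fin m), Injective ρ → Injective ρ' →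
      (Finset.univ.filter fun t => ρ t ≠ ρ' t).card ≤ n →
      Conn wr ar (Phi wr ar ρ) (Phi wr ar ρ') := by
  intro n
  induction n with
  | zero =>
    intro ρ ρ' _ _ hc
    have : ρ = ρ' := by
      funext u
      by_contra hu
      have hmem : u ∈ Finset.univ.filter fun t => ρ t ≠ ρ' t := by
        simp only [Finset.mem_filter, Finset.mem_univ, true_and]
        exact hu
      have := Finset.card_pos.2 ⟨u, hmem⟩
      omega
    rw [this]
    exact Relation.ReflTransGen.refl
  | succ n ih =>
    intro ρ ρ' hρ hρ' hc
    by_cases hne : ρ = ρ'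
    · rw [hne]
      exact Relation.ReflTransGen.refl
    · obtain ⟨t, ht⟩ : ∃ t, ρ t ≠ ρ' t := by
        by_contra h
        push_neg at h
        exact hne (funext h)
      have htmem : t ∈ Finset.univ.filter fun u => ρ u ≠ ρ' u := by
        simp only [Finset.mem_filter, Finset.mem_univ, true_and]
        exact ht
      have hcard1 : 1 ≤ (Finset.univ.filter fun u => ρ u ≠ ρ' u).card :=
        Finset.card_pos.2 ⟨t, htmem⟩
      by_cases hmem : ∃ s, ρ s = ρ' t
      · obtain ⟨s, hs⟩ := hmem
        have hst : s ≠ t := by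
          rintro rfl
          exact ht hs
        obtain ⟨q, hq⟩ := exists_free hm hρ
        have hρ₂ : Injective (Function.update ρ s q) := update_injective hρ hq
        have step1 := conn_move wr ar hρ s hq
        have h2 : ∀ u, Function.update ρ s q u ≠ ρ' t := by
          intro u
          rcases eq_or_ne u s with rfl | hu
          · rw [Function.update_self]
            exact fun h => hq u (hs.trans h.symm)
          · rw [Function.update_of_ne hu]
            exact fun h => hu (hρ (h.trans hs.symm))
        have hρ₃ : Injective (Function.update (Function.update ρ s q) t (ρ' t)) :=
          update_injective hρ₂ h2
        have step2 := conn_move wr ar hρ₂ t h2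
        have hsub : (Finset.univ.filter
              fun u => Function.update (Function.update ρ s q) t (ρ' t) u ≠ ρ' u) ⊆
            (Finset.univ.filter fun u => ρ u ≠ ρ' u).erase t := by
          intro u hu
          rw [Finset.mem_filter] at hu
          have hut : u ≠ t := by
            rintro rfl
            exact hu.2 (Function.update_self u (ρ' u) (Function.update ρ s q))
          rw [Finset.mem_erase, Finset.mem_filter]
          refine ⟨hut, Finset.mem_univ u, ?_⟩
          rcases eq_or_ne u s with rfl | hus
          · intro h
            exact hst (hρ' (hs.symm.trans h)).symm
          · intro h
            apply hu.2
            rw [Function.update_of_ne hut, Function.update_of_ne hus, h]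
        have hbound : (Finset.univ.filter
            fun u => Function.update (Function.update ρ s q) t (ρ' t) u ≠ ρ' u).card ≤ n := by
          have h1 := Finset.card_le_card hsub
          rw [Finset.card_erase_of_mem htmem] at h1
          omega
        exact step1.trans (step2.trans (ih _ ρ' hρ₃ hρ' hbound))
      · push_neg at hmem
        have hρ₂ : Injective (Function.update ρ t (ρ' t)) := update_injective hρ hmem
        have step1 := conn_move wr ar hρ t hmem
        have hsub : (Finset.univ.filter fun u => Function.update ρ t (ρ' t) u ≠ ρ' u) ⊆
            (Finset.univ.filter fun u => ρ u ≠ ρ' u).erase t := by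
          intro u hu
          rw [Finset.mem_filter] at hu
          have hut : u ≠ t := by
            rintro rfl
            exact hu.2 (Function.update_self u (ρ' u) ρ)
          rw [Finset.mem_erase, Finset.mem_filter]
          refine ⟨hut, Finset.mem_univ u, ?_⟩
          intro h
          apply hu.2
          rw [Function.update_of_ne hut, h]
        have hbound : (Finset.univ.filter
            fun u => Function.update ρ t (ρ' t) u ≠ ρ' u).card ≤ n := by
          have h1 := Finset.card_le_card hsub
          rw [Finset.card_erase_of_mem htmem] at h1
          omega
        exact step1.trans (ih _ ρ' hρ₂ hρ' hbound)

/-- Every point of the manifold is connected to a canonical point. -/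
lemma conn_to_canonical {θ : (Fin m → Fin din → ℝ) × (Fin m → Fin dout → ℝ)}
    (hθ : θ ∈ expansionManifold r m wr ar) :
    ∃ ρ : Fin r → Fin m, Injective ρ ∧ Conn wr ar θ (Phi wr ar ρ) := by
  obtain ⟨j, w', g, h1, h2, h3, h4⟩ := hθ
  choose rep hrep using h1
  have hinj : Injective rep := by
    intro a b hab
    have ha := hrep a
    rw [hab, hrep b] at ha
    exact (Sum.inl_injective ha).symm
  set θ₁ : (Fin m → Fin din → ℝ) × (Fin m → Fin dout → ℝ) :=
    (fun i => Sum.elim wr (fun _ _ => 0) (g i),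
     fun i => Sum.elim (fun t => if i = rep t then ar t else 0)
       (fun _ => (0 : Fin dout → ℝ)) (g i)) with hθ₁
  have memθ : θ ∈ Mg wr ar j g := ⟨w', fun t => ⟨rep t, hrep t⟩, h2, h3, h4⟩
  have memθ₁ : θ₁ ∈ Mg wr ar j g := by
    refine ⟨fun _ _ => 0, fun t => ⟨rep t, hrep t⟩, fun i => rfl, ?_, ?_⟩
    · intro t
      have hterm : ∀ i ∈ Finset.univ.filter (fun i => g i = Sum.inl t),
          θ₁.2 i = if i = rep t then ar t else 0 := by
        intro i hi
        rw [Finset.mem_filter] at hi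
        show Sum.elim _ _ (g i) = _
        rw [hi.2, Sum.elim_inl]
      rw [Finset.sum_congr rfl hterm, Finset.sum_ite_eq']
      rw [if_pos]
      simp only [Finset.mem_filter, Finset.mem_univ, true_and]
      exact hrep t
    · intro t
      refine Finset.sum_eq_zero fun i hi => ?_
      rw [Finset.mem_filter] at hi
      show Sum.elim _ _ (g i) = _
      rw [hi.2, Sum.elim_inr]
  have step1 : Seg wr ar θ θ₁ := seg_of_Mg wr ar memθ memθ₁
  have memC : θ₁ ∈ Mg wr ar m (grp rep) := by
    refine mem_Mg_of_rep wr ar hinj ?_ ?_ ?_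
    · intro t
      show Sum.elim wr (fun _ _ => 0) (g (rep t)) = wr t
      rw [hrep t, Sum.elim_inl]
    · intro t
      show Sum.elim (fun u => if rep t = rep u then ar u else 0)
        (fun _ => (0 : Fin dout → ℝ)) (g (rep t)) = ar t
      rw [hrep t, Sum.elim_inl, if_pos rfl]
    · intro i hi
      show Sum.elim _ _ (g i) = _
      cases hgi : g i with
      | inl u =>
        rw [Sum.elim_inl, if_neg (fun h => hi u h.symm)]
      | inr u =>
        rw [Sum.elim_inr]
  have step2 : Seg wr ar θ₁ (Phi wr ar rep) := seg_of_Mg wr ar memC (Phi_mem wr ar hinj)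
  exact ⟨rep, hinj, (Relation.ReflTransGen.single step1).trans
    (Relation.ReflTransGen.single step2)⟩

end

end EMProof

theorem expansionManifold_connected_by_segments
    {din dout r m : ℕ} (hm : r < m)
    (wr : Fin r → Fin din → ℝ) (ar : Fin r → Fin dout → ℝ)
    (hirr_w : Function.Injective wr) (hirr_a : ∀ t, ar t ≠ 0)
    (θ θ' : (Fin m → Fin din → ℝ) × (Fin m → Fin dout → ℝ))
    (hθ : θ ∈ expansionManifold r m wr ar)
    (hθ' : θ' ∈ expansionManifold r m wr ar) :
    ∃ (n : ℕ) (p : Fin (n + 1) → (Fin m → Fin din → ℝ) × (Fin m → Fin dout → ℝ)),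
      p 0 = θ ∧ p (Fin.last n) = θ' ∧
      ∀ i : Fin n, segment ℝ (p i.castSucc) (p i.succ) ⊆ expansionManifold r m wr ar := by
  obtain ⟨ρ, hρ, c1⟩ := EMProof.conn_to_canonical wr ar hθ
  obtain ⟨ρ', hρ'2, c2⟩ := EMProof.conn_to_canonical wr ar hθ'
  have c3 := EMProof.conn_perm wr ar hm _ ρ ρ' hρ hρ'2 le_rfl
  exact EMProof.conn_to_chain wr ar (c1.trans (c3.trans (EMProof.Conn_symm wr ar c2)))
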